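/- Let u : [0,∞) × ℝ² → ℂ be bounded in L_t^∞ L_x² with mass M(u(t)) ≤ M₀, and suppose there is a function λ : [0,∞) → [1,∞) with λ(t) ≤ C t^{1/2} for t > T₀, such that for every ε > 0 there is C_ε with ∫_{|x|>C_ε λ(t)} |u(t,x)|² dx < ε for all t. Then for every Schwartz function φ, ⟨u(t), e^{itΔ}φ⟩ → 0 as t → ∞. -/

import Mathlib

open MeasureTheory Filter
open scoped ENNReal NNReal

private lemma aux_mul_le_sq_add_sq (a b : ℝ≥0∞) : a * b ≤ a ^ 2 + b ^ 2 := by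
  rcases le_total a b with h | h
  · calc a * b ≤ b * b := mul_le_mul_left h b
      _ = b ^ 2 := (sq b).symm
      _ ≤ a ^ 2 + b ^ 2 := le_add_self
  · calc a * b ≤ a * a := mul_le_mul_right h a
      _ = a ^ 2 := (sq a).symm
      _ ≤ a ^ 2 + b ^ 2 := le_self_add

private lemma aux_weighted (c a b : ℝ≥0∞) (hc0 : c ≠ 0) (hct : c ≠ ∞) :
    a * b ≤ c ^ 2 * a ^ 2 + (c⁻¹) ^ 2 * b ^ 2 := by
  have h : a * b = (c * a) * (c⁻¹ * b) := by
    rw [mul_mul_mul_comm, ENNReal.mul_inv_cancel hc0 hct, one_mul]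
  rw [h]
  calc (c * a) * (c⁻¹ * b) ≤ (c * a) ^ 2 + (c⁻¹ * b) ^ 2 := aux_mul_le_sq_add_sq _ _
    _ = c ^ 2 * a ^ 2 + (c⁻¹) ^ 2 * b ^ 2 := by ring


private lemma aux_split {α : Type*} [MeasurableSpace α] (μ : Measure α)
    (c₁ c₂ : ℝ≥0∞) (hc₁ : c₁ ≠ ∞) (hc₂ : c₂ ≠ ∞) (f g : α → ℝ≥0∞)
    (hf : AEMeasurable f μ) :
    ∫⁻ x, (c₁ * f x + c₂ * g x) ∂μ = c₁ * ∫⁻ x, f x ∂μ + c₂ * ∫⁻ x, g x ∂μ := by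
  rw [lintegral_add_left' (hf.const_mul _), lintegral_const_mul' _ _ hc₁,
    lintegral_const_mul' _ _ hc₂]

set_option maxHeartbeats 1000000 in
/-- If `u` is bounded in `L_t^∞ L_x²`, concentrated at spatial scale `λ(t) ≤ C√t`
(uniform tightness modulo `λ(t)`), then `⟨u(t), e^{itΔ}φ⟩ → 0` as `t → ∞` for every
Schwartz `φ`, where the propagator obeys the `L²` isometry and the dispersive estimate. -/
theorem stmt9 (u : ℝ → EuclideanSpace ℝ (Fin 2) → ℂ) (M₀ : ℝ)
    (hmeas : ∀ t, MemLp (u t) 2 volume)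
    (hmass : ∀ t, 0 ≤ t → ∫ x, ‖u t x‖ ^ 2 ≤ M₀)
    (lam : ℝ → ℝ) (hlam1 : ∀ t, 1 ≤ lam t)
    (hlam2 : ∃ C > 0, ∃ T₀ : ℝ, ∀ t, T₀ < t → lam t ≤ C * Real.sqrt t)
    (htight : ∀ ε > 0, ∃ Cε > 0, ∀ t, 0 ≤ t →
      (∫ x in {x : EuclideanSpace ℝ (Fin 2) | Cε * lam t < ‖x‖}, ‖u t x‖ ^ 2) < ε)
    (P : ℝ → (EuclideanSpace ℝ (Fin 2) → ℂ) → (EuclideanSpace ℝ (Fin 2) → ℂ))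
    (hPiso : ∀ t f, eLpNorm (P t f) 2 volume = eLpNorm f 2 volume)
    (hPdisp : ∃ Cd > 0, ∀ t : ℝ, 0 < t → ∀ f : EuclideanSpace ℝ (Fin 2) → ℂ,
      Integrable f volume → ∀ x, ‖P t f x‖ ≤ Cd * t⁻¹ * ∫ y, ‖f y‖)
    (φ : SchwartzMap (EuclideanSpace ℝ (Fin 2)) ℂ) :
    Tendsto (fun t => ∫ x, (starRingEnd ℂ) (u t x) * P t (⇑φ) x) atTop (nhds (0:ℂ)) := by
  have hM0 : 0 ≤ M₀ :=
    le_trans (integral_nonneg fun x => sq_nonneg _) (hmass 0 le_rfl)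
  obtain ⟨Cd, hCd, hdisp⟩ := hPdisp
  obtain ⟨C, hC, T₀, hT₀⟩ := hlam2
  -- φ is in L²
  have hφint : Integrable (⇑φ) volume := φ.integrable
  have hφmem2 : MemLp (⇑φ) 2 volume := by
    rw [memLp_two_iff_integrable_sq_norm φ.continuous.aestronglyMeasurable]
    obtain ⟨B, hBpos, hB⟩ := φ.decay 0 0
    refine Integrable.mono' (hφint.norm.const_mul B)
      ((continuous_norm.comp φ.continuous).pow 2).aestronglyMeasurable
      (Eventually.of_forall fun x => ?_)
    have hBx : ‖φ x‖ ≤ B := by simpa using hB x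
    have h0 : (0:ℝ) ≤ ‖φ x‖ := norm_nonneg _
    calc ‖‖φ x‖ ^ 2‖ = ‖φ x‖ * ‖φ x‖ := by rw [Real.norm_of_nonneg (sq_nonneg _), sq]
      _ ≤ B * ‖φ x‖ := mul_le_mul_of_nonneg_right hBx h0
  have hφ2top : eLpNorm (⇑φ) 2 volume ≠ ∞ := hφmem2.2.ne
  rw [Metric.tendsto_atTop]
  intro δ hδ
  set N2 : ℝ := (eLpNorm (⇑φ) 2 volume).toReal with hN2def
  have hN2 : (0:ℝ) ≤ N2 := ENNReal.toReal_nonneg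
  set η : ℝ := δ / (8 * (N2 ^ 2 + 1)) with hηdef
  have hηpos : 0 < η := by positivity
  set k : ℝ := δ / (8 * (M₀ + 1)) with hkdef
  have hkpos : 0 < k := by positivity
  set ε : ℝ := η * (δ / 8) with hεdef
  have hεpos : 0 < ε := by positivity
  obtain ⟨Cε, hCε, htig⟩ := htight ε hεpos
  set L1 : ℝ := ∫ y, ‖φ y‖ with hL1def
  have hL1 : 0 ≤ L1 := integral_nonneg fun y => norm_nonneg _
  set vb : ℝ := (volume (Metric.ball (0 : EuclideanSpace ℝ (Fin 2)) 1)).toReal with hvbdef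
  have hvb : 0 ≤ vb := ENNReal.toReal_nonneg
  set K : ℝ := Cd ^ 2 * L1 ^ 2 * Cε ^ 2 * C ^ 2 * vb / k with hKdef
  have hK : 0 ≤ K := by positivity
  refine ⟨max (max (T₀ + 1) 1) (8 * (K + 1) / δ), fun t ht => ?_⟩
  have htT₀ : T₀ < t := by
    have := le_trans (le_max_left _ _) (le_trans (le_max_left _ _) ht); linarith
  have ht1 : (1:ℝ) ≤ t := le_trans (le_trans (le_max_right _ _) (le_max_left _ _)) ht
  have htpos : 0 < t := lt_of_lt_of_le one_pos ht1
  have ht0 : 0 ≤ t := htpos.le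
  have htK : 8 * (K + 1) / δ ≤ t := le_trans (le_max_right _ _) ht
  rw [dist_zero_right]
  -- the splitting set
  set s : Set (EuclideanSpace ℝ (Fin 2)) := {x | Cε * lam t < ‖x‖} with hsdef
  have hs : MeasurableSet s := measurableSet_lt measurable_const (continuous_norm.measurable)
  set r : ℝ := Cε * lam t with hrdef
  have hr0 : 0 ≤ r := by
    have := hlam1 t; positivity
  have hsc : sᶜ = Metric.closedBall (0 : EuclideanSpace ℝ (Fin 2)) r := by
    ext x
    simp [hsdef, Metric.mem_closedBall, dist_eq_norm, not_lt]
  -- integrability of ‖u t ·‖²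
  have huint : Integrable (fun x => ‖u t x‖ ^ 2) volume := by
    have h := (hmeas t).integrable_norm_rpow two_ne_zero ENNReal.ofNat_ne_top
    refine h.congr (Eventually.of_forall fun x => ?_)
    norm_num
  have huae : AEMeasurable (fun x => (‖u t x‖₊ : ℝ≥0∞) ^ 2) volume :=
    ((hmeas t).1.enorm).pow_const 2
  -- enorm-square to ofReal conversion
  have hsqconv : ∀ (z : ℂ), (‖z‖₊ : ℝ≥0∞) ^ 2 = ENNReal.ofReal (‖z‖ ^ 2) := by
    intro z
    rw [← enorm_eq_nnnorm, ← ofReal_norm, ← ENNReal.ofReal_pow (norm_nonneg _)]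
  -- lintegral of ‖u‖² over any set S
  have hulint : ∀ S : Set (EuclideanSpace ℝ (Fin 2)),
      ∫⁻ x in S, (‖u t x‖₊ : ℝ≥0∞) ^ 2 = ENNReal.ofReal (∫ x in S, ‖u t x‖ ^ 2) := by
    intro S
    rw [ofReal_integral_eq_lintegral_ofReal (huint.restrict)
      (Eventually.of_forall fun x => sq_nonneg _)]
    exact lintegral_congr fun x => hsqconv _
  -- dispersive bound on P t φ
  have hPb : ∀ x, (‖P t (⇑φ) x‖₊ : ℝ≥0∞) ≤ ENNReal.ofReal (Cd * t⁻¹ * L1) := by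
    intro x
    rw [← enorm_eq_nnnorm, ← ofReal_norm]
    exact ENNReal.ofReal_le_ofReal (hdisp t htpos (⇑φ) hφint x)
  -- L² norm of P t φ as a lintegral
  have hPlint : ∫⁻ x, (‖P t (⇑φ) x‖₊ : ℝ≥0∞) ^ 2 = ENNReal.ofReal (N2 ^ 2) := by
    have h2 : eLpNorm (P t ⇑φ) 2 volume = eLpNorm (⇑φ) 2 volume := hPiso t _
    have h3 : eLpNorm (P t ⇑φ) 2 volume
        = (∫⁻ x, (‖P t (⇑φ) x‖₊ : ℝ≥0∞) ^ (2:ℝ)) ^ (1/(2:ℝ)) := by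
      rw [eLpNorm_eq_lintegral_rpow_enorm_toReal two_ne_zero ENNReal.ofNat_ne_top]
      norm_num
      simp only [enorm_eq_nnnorm]
    have h4 : (∫⁻ x, (‖P t (⇑φ) x‖₊ : ℝ≥0∞) ^ (2:ℝ))
        = (eLpNorm (P t ⇑φ) 2 volume) ^ (2:ℝ) := by
      rw [h3, ← ENNReal.rpow_mul]
      norm_num
    have h5 : ∀ (a : ℝ≥0∞), a ^ (2:ℝ) = a ^ (2:ℕ) := fun a => by
      rw [← ENNReal.rpow_natCast a 2]; norm_num
    calc ∫⁻ x, (‖P t (⇑φ) x‖₊ : ℝ≥0∞) ^ 2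
        = ∫⁻ x, (‖P t (⇑φ) x‖₊ : ℝ≥0∞) ^ (2:ℝ) := lintegral_congr fun x => (h5 _).symm
      _ = (eLpNorm (P t ⇑φ) 2 volume) ^ (2:ℝ) := h4
      _ = (eLpNorm (⇑φ) 2 volume) ^ (2:ℝ) := by rw [h2]
      _ = (ENNReal.ofReal N2) ^ (2:ℝ) := by rw [hN2def, ENNReal.ofReal_toReal hφ2top]
      _ = (ENNReal.ofReal N2) ^ (2:ℕ) := h5 _
      _ = ENNReal.ofReal (N2 ^ 2) := (ENNReal.ofReal_pow hN2 2).symm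
  -- step 1 : bound the norm of the integral by a lintegral
  set F : EuclideanSpace ℝ (Fin 2) → ℝ≥0∞ :=
    fun x => (‖u t x‖₊ : ℝ≥0∞) * (‖P t (⇑φ) x‖₊ : ℝ≥0∞) with hFdef
  have step1 : ‖∫ x, (starRingEnd ℂ) (u t x) * P t (⇑φ) x‖ ≤ (∫⁻ x, F x).toReal := by
    refine le_trans (norm_integral_le_lintegral_norm _) (le_of_eq ?_)
    congr 1
    refine lintegral_congr fun x => ?_
    rw [norm_mul, RCLike.norm_conj, ENNReal.ofReal_mul (norm_nonneg _),
      ofReal_norm, ofReal_norm]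
    rfl
  -- outer estimate
  have houter : ∫⁻ x in s, F x ≤ ENNReal.ofReal (δ/8) + ENNReal.ofReal (δ/8) := by
    set dd : ℝ≥0∞ := ENNReal.ofReal (Real.sqrt η) with hdddef
    have hdd0 : dd ≠ 0 := by
      simp only [hdddef, ne_eq, ENNReal.ofReal_eq_zero, not_le]
      exact Real.sqrt_pos.2 hηpos
    have hddt : dd ≠ ∞ := ENNReal.ofReal_ne_top
    have hddsq : dd ^ 2 = ENNReal.ofReal η := by
      rw [hdddef, ← ENNReal.ofReal_pow (Real.sqrt_nonneg _), Real.sq_sqrt hηpos.le]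
    have hpt : ∀ x, F x ≤ (dd⁻¹) ^ 2 * (‖u t x‖₊ : ℝ≥0∞) ^ 2
        + dd ^ 2 * (‖P t (⇑φ) x‖₊ : ℝ≥0∞) ^ 2 := by
      intro x
      have := aux_weighted dd⁻¹ (‖u t x‖₊ : ℝ≥0∞) (‖P t (⇑φ) x‖₊ : ℝ≥0∞)
        (ENNReal.inv_ne_zero.2 hddt) (ENNReal.inv_ne_top.2 hdd0)
      simpa [inv_inv] using this
    calc ∫⁻ x in s, F x
        ≤ ∫⁻ x in s, ((dd⁻¹) ^ 2 * (‖u t x‖₊ : ℝ≥0∞) ^ 2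
            + dd ^ 2 * (‖P t (⇑φ) x‖₊ : ℝ≥0∞) ^ 2) := lintegral_mono hpt
      _ = (dd⁻¹) ^ 2 * (∫⁻ x in s, (‖u t x‖₊ : ℝ≥0∞) ^ 2)
            + dd ^ 2 * (∫⁻ x in s, (‖P t (⇑φ) x‖₊ : ℝ≥0∞) ^ 2) :=
          aux_split _ _ _ (ENNReal.pow_ne_top (ENNReal.inv_ne_top.2 hdd0))
            (ENNReal.pow_ne_top hddt) _ _ huae.restrict
      _ ≤ ENNReal.ofReal (δ/8) + ENNReal.ofReal (δ/8) := by
          have h1 : ∫⁻ x in s, (‖u t x‖₊ : ℝ≥0∞) ^ 2 ≤ ENNReal.ofReal ε := by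
            rw [hulint s]
            exact ENNReal.ofReal_le_ofReal (htig t ht0).le
          have hA : (dd⁻¹) ^ 2 * (∫⁻ x in s, (‖u t x‖₊ : ℝ≥0∞) ^ 2)
              ≤ ENNReal.ofReal (δ/8) := by
            calc (dd⁻¹) ^ 2 * (∫⁻ x in s, (‖u t x‖₊ : ℝ≥0∞) ^ 2)
                ≤ (dd⁻¹) ^ 2 * ENNReal.ofReal ε := mul_le_mul_right h1 _
              _ = (dd ^ 2)⁻¹ * (ENNReal.ofReal η * ENNReal.ofReal (δ/8)) := by
                  rw [← ENNReal.inv_pow, hεdef, ENNReal.ofReal_mul hηpos.le]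
              _ = ENNReal.ofReal (δ/8) := by
                  rw [hddsq, ← mul_assoc, ENNReal.inv_mul_cancel
                    (by simpa using hηpos) ENNReal.ofReal_ne_top, one_mul]
          have h2 : ∫⁻ x in s, (‖P t (⇑φ) x‖₊ : ℝ≥0∞) ^ 2 ≤ ENNReal.ofReal (N2 ^ 2) := by
            rw [← hPlint]; exact setLIntegral_le_lintegral s _
          have hB : dd ^ 2 * (∫⁻ x in s, (‖P t (⇑φ) x‖₊ : ℝ≥0∞) ^ 2)
              ≤ ENNReal.ofReal (δ/8) := by
            calc dd ^ 2 * (∫⁻ x in s, (‖P t (⇑φ) x‖₊ : ℝ≥0∞) ^ 2)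
                ≤ ENNReal.ofReal η * ENNReal.ofReal (N2 ^ 2) := by
                  rw [hddsq]; exact mul_le_mul_right h2 _
              _ = ENNReal.ofReal (η * N2 ^ 2) := (ENNReal.ofReal_mul hηpos.le).symm
              _ ≤ ENNReal.ofReal (δ/8) := by
                  apply ENNReal.ofReal_le_ofReal
                  have hb : η * (N2 ^ 2 + 1) = δ/8 := by
                    rw [hηdef]; field_simp
                  nlinarith [hηpos.le]
          exact add_le_add hA hB
  -- inner estimate
  have hinner : ∫⁻ x in sᶜ, F x ≤ ENNReal.ofReal (δ/8) + ENNReal.ofReal (δ/8) := by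
    set kk : ℝ≥0∞ := ENNReal.ofReal (Real.sqrt k) with hkkdef
    have hkk0 : kk ≠ 0 := by
      simp only [hkkdef, ne_eq, ENNReal.ofReal_eq_zero, not_le]
      exact Real.sqrt_pos.2 hkpos
    have hkkt : kk ≠ ∞ := ENNReal.ofReal_ne_top
    have hkksq : kk ^ 2 = ENNReal.ofReal k := by
      rw [hkkdef, ← ENNReal.ofReal_pow (Real.sqrt_nonneg _), Real.sq_sqrt hkpos.le]
    set Bt : ℝ≥0∞ := ENNReal.ofReal (Cd * t⁻¹ * L1) with hBtdef
    have hBtt : Bt ≠ ∞ := ENNReal.ofReal_ne_top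
    have hpt : ∀ x, F x ≤ kk ^ 2 * (‖u t x‖₊ : ℝ≥0∞) ^ 2 + (kk⁻¹) ^ 2 * Bt ^ 2 := by
      intro x
      refine le_trans (aux_weighted kk _ _ hkk0 hkkt) ?_
      gcongr
      exact hPb x
    have hA : kk ^ 2 * (∫⁻ x in sᶜ, (‖u t x‖₊ : ℝ≥0∞) ^ 2) ≤ ENNReal.ofReal (δ/8) := by
      have h1 : ∫⁻ x in sᶜ, (‖u t x‖₊ : ℝ≥0∞) ^ 2 ≤ ENNReal.ofReal M₀ := by
        rw [hulint sᶜ]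
        apply ENNReal.ofReal_le_ofReal
        refine le_trans ?_ (hmass t ht0)
        exact setIntegral_le_integral huint (Eventually.of_forall fun x => sq_nonneg _)
      calc kk ^ 2 * (∫⁻ x in sᶜ, (‖u t x‖₊ : ℝ≥0∞) ^ 2)
          ≤ ENNReal.ofReal k * ENNReal.ofReal M₀ := by
            rw [hkksq]; exact mul_le_mul_right h1 _
        _ = ENNReal.ofReal (k * M₀) := (ENNReal.ofReal_mul hkpos.le).symm
        _ ≤ ENNReal.ofReal (δ/8) := by
            apply ENNReal.ofReal_le_ofReal
            have hb : k * (M₀ + 1) = δ/8 := by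
              rw [hkdef]; field_simp
            nlinarith [hkpos.le]
    have hB : (kk⁻¹) ^ 2 * (∫⁻ _x in sᶜ, Bt ^ 2) ≤ ENNReal.ofReal (δ/8) := by
      have hvbeq : volume (Metric.ball (0 : EuclideanSpace ℝ (Fin 2)) 1)
          = ENNReal.ofReal vb := by
        rw [hvbdef, ENNReal.ofReal_toReal]
        exact (measure_ball_lt_top).ne
      have hvol : volume sᶜ = ENNReal.ofReal (r ^ 2 * vb) := by
        rw [hsc, Measure.addHaar_closedBall _ _ hr0, finrank_euclideanSpace_fin, hvbeq,
          ← ENNReal.ofReal_mul (by positivity)]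
      have hr2 : r ^ 2 ≤ Cε ^ 2 * C ^ 2 * t := by
        have hl : lam t ≤ C * Real.sqrt t := hT₀ t htT₀
        have h1 : r ≤ Cε * (C * Real.sqrt t) := by
          rw [hrdef]; exact mul_le_mul_of_nonneg_left hl hCε.le
        calc r ^ 2 ≤ (Cε * (C * Real.sqrt t)) ^ 2 := pow_le_pow_left₀ hr0 h1 2
          _ = Cε ^ 2 * C ^ 2 * (Real.sqrt t ^ 2) := by ring
          _ = Cε ^ 2 * C ^ 2 * t := by rw [Real.sq_sqrt ht0]
      have hKt : k⁻¹ * ((Cd * t⁻¹ * L1) ^ 2 * (Cε ^ 2 * C ^ 2 * t * vb)) = K * t⁻¹ := by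
        rw [hKdef]
        field_simp
      have hfin : K * t⁻¹ ≤ δ/8 := by
        have h8 : 8 * (K + 1) ≤ t * δ := by
          rw [div_le_iff₀ hδ] at htK; exact htK
        rw [← div_eq_mul_inv, div_le_div_iff₀ htpos (by norm_num : (0:ℝ) < 8)]
        nlinarith
      calc (kk⁻¹) ^ 2 * (∫⁻ _x in sᶜ, Bt ^ 2)
          = (ENNReal.ofReal k)⁻¹ * (Bt ^ 2 * volume sᶜ) := by
            rw [setLIntegral_const, ← ENNReal.inv_pow, hkksq]
        _ = (ENNReal.ofReal k)⁻¹ * (ENNReal.ofReal ((Cd * t⁻¹ * L1) ^ 2)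
              * ENNReal.ofReal (r ^ 2 * vb)) := by
            rw [hvol, hBtdef, ← ENNReal.ofReal_pow (by positivity)]
        _ = ENNReal.ofReal k⁻¹ * ENNReal.ofReal ((Cd * t⁻¹ * L1) ^ 2 * (r ^ 2 * vb)) := by
            rw [← ENNReal.ofReal_mul (by positivity), ENNReal.ofReal_inv_of_pos hkpos]
        _ = ENNReal.ofReal (k⁻¹ * ((Cd * t⁻¹ * L1) ^ 2 * (r ^ 2 * vb))) := by
            rw [← ENNReal.ofReal_mul (by positivity)]
        _ ≤ ENNReal.ofReal (δ/8) := by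
            apply ENNReal.ofReal_le_ofReal
            calc k⁻¹ * ((Cd * t⁻¹ * L1) ^ 2 * (r ^ 2 * vb))
                ≤ k⁻¹ * ((Cd * t⁻¹ * L1) ^ 2 * (Cε ^ 2 * C ^ 2 * t * vb)) := by
                  gcongr
              _ = K * t⁻¹ := hKt
              _ ≤ δ/8 := hfin
    calc ∫⁻ x in sᶜ, F x
        ≤ ∫⁻ x in sᶜ, (kk ^ 2 * (‖u t x‖₊ : ℝ≥0∞) ^ 2 + (kk⁻¹) ^ 2 * Bt ^ 2) :=
          lintegral_mono hpt
      _ = kk ^ 2 * (∫⁻ x in sᶜ, (‖u t x‖₊ : ℝ≥0∞) ^ 2)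
            + (kk⁻¹) ^ 2 * (∫⁻ _x in sᶜ, Bt ^ 2) :=
          aux_split _ _ _ (ENNReal.pow_ne_top hkkt)
            (ENNReal.pow_ne_top (ENNReal.inv_ne_top.2 hkk0)) _ _ huae.restrict
      _ ≤ ENNReal.ofReal (δ/8) + ENNReal.ofReal (δ/8) := add_le_add hA hB
  -- combine
  have hmain : ∫⁻ x, F x ≤ ENNReal.ofReal (δ/2) := by
    rw [← lintegral_add_compl F hs]
    calc (∫⁻ x in s, F x) + ∫⁻ x in sᶜ, F x
        ≤ (ENNReal.ofReal (δ/8) + ENNReal.ofReal (δ/8))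
          + (ENNReal.ofReal (δ/8) + ENNReal.ofReal (δ/8)) := add_le_add houter hinner
      _ = ENNReal.ofReal (δ/2) := by
          rw [← ENNReal.ofReal_add (by positivity) (by positivity)]
          rw [← ENNReal.ofReal_add (by positivity) (by positivity)]
          congr 1
          ring
  have : (∫⁻ x, F x).toReal ≤ δ/2 := by
    refine le_trans (ENNReal.toReal_mono ENNReal.ofReal_ne_top hmain) ?_
    rw [ENNReal.toReal_ofReal (by positivity)]
  linarith [le_trans step1 this]
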